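/- Let X be a nonempty set, fix ξ ∈ X, and let (H, e_H, ⋈) with j : F_X → H be a universal D-envelope of (F_X, ē). Then the element x := ⋈(0, 0, j(ā_ξ), e_H − j(ā_ξ)) of H satisfies 0 < x and 2x ≤ e_H. In particular e_H does not have index 1 in H (there is a nonzero x ≥ 0 with 2x ≤ e_H). -/

import Mathlib

/-- An interpolator on a partially ordered abelian group. -/
def IsInterpolator {H : Type*} [AddCommGroup H] [PartialOrder H] [IsOrderedAddMonoid H] (ι : H → H → H → H → H) : Prop :=
  (∀ x x' y y', ι x x' y y' = ι x' x y y') ∧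
  (∀ x x' y y', ι x x' y y' = ι x x' y' y) ∧
  (∀ x x' y y', x ≤ y → x ≤ y' → x' ≤ y → x' ≤ y' →
    (x ≤ ι x x' y y' ∧ x' ≤ ι x x' y y' ∧ ι x x' y y' ≤ y ∧ ι x x' y y' ≤ y'))

/-- A D-structure: an unperforated partially ordered abelian group with a distinguished
positive element `e` such that `0 ≤ x` and `3x ≤ e` imply `x = 0`, and an interpolator. -/
def IsDStructure {H : Type*} [AddCommGroup H] [PartialOrder H] [IsOrderedAddMonoid H] (e : H) (ι : H → H → H → H → H) : Prop :=
  (∀ (m : ℕ) (x : H), 0 < m → 0 ≤ m • x → 0 ≤ x) ∧ 0 ≤ e ∧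
  (∀ x : H, 0 ≤ x → 3 • x ≤ e → x = 0) ∧ IsInterpolator ι

/-- A D-morphism between D-structures. -/
def IsDMorphism {H K : Type*} [AddCommGroup H] [PartialOrder H] [IsOrderedAddMonoid H] [AddCommGroup K] [PartialOrder K] [IsOrderedAddMonoid K]
    (eH : H) (ιH : H → H → H → H → H) (eK : K) (ιK : K → K → K → K → K)
    (h : H →+ K) : Prop :=
  Monotone h ∧ h eH = eK ∧
  ∀ x x' y y', h (ιH x x' y y') = ιK (h x) (h x') (h y) (h y')

/-- A universal D-envelope of a pointed partially ordered abelian group `(G, eG)`. -/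
def IsUniversalDEnvelope {G H : Type*} [AddCommGroup G] [PartialOrder G] [IsOrderedAddMonoid G] [AddCommGroup H] [PartialOrder H] [IsOrderedAddMonoid H]
    (eG : G) (eH : H) (bow : H → H → H → H → H) (j : G →+ H) : Prop :=
  IsDStructure eH bow ∧ Monotone j ∧ j eG = eH ∧
  ∀ (K : Type*) [AddCommGroup K] [PartialOrder K] [IsOrderedAddMonoid K], ∀ (eK : K) (ι : K → K → K → K → K),
    IsDStructure eK ι → ∀ (f : G →+ K), Monotone f → f eG = eK →
    ∃! h : H →+ K, IsDMorphism eH bow eK ι h ∧ ∀ g, h (j g) = f g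

/-- The constant function `1` on the powerset of `X`. -/
def eBar (X : Type*) : Set X → ℤ := fun _ => 1

/-- The characteristic function of `{Y ⊆ X : ξ ∈ Y}`. -/
noncomputable def aBar {X : Type*} (ξ : X) : Set X → ℤ :=
  Set.indicator {Y : Set X | ξ ∈ Y} fun _ => 1

/-- The subgroup of `Set X → ℤ` generated by `ē` and the `ā_ξ`, ordered componentwise. -/
noncomputable def FX (X : Type*) : AddSubgroup (Set X → ℤ) :=
  AddSubgroup.closure ({eBar X} ∪ Set.range (aBar (X := X)))

/-- `ē` as an element of `F_X`. -/
noncomputable def eElem (X : Type*) : FX X :=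
  ⟨eBar X, AddSubgroup.subset_closure (Set.mem_union_left _ rfl)⟩

/-- `ā_ξ` as an element of `F_X`. -/
noncomputable def aElem {X : Type*} (ξ : X) : FX X :=
  ⟨aBar ξ, AddSubgroup.subset_closure (Set.mem_union_right _ ⟨ξ, rfl⟩)⟩

universe u v

universe w in
instance : IsOrderedAddMonoid (ULift.{w} ℤ) where
  add_le_add_left a b h c := by
    have h' : a.down ≤ b.down := h
    show (a + c).down ≤ (b + c).down
    simp only [ULift.add_down]
    omega

/-- In the universal D-envelope `(H, e_H, ⋈)` of `(F_X, ē)` with `X` nonempty, the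
element `x = ⋈(0, 0, j(ā_ξ), e_H − j(ā_ξ))` satisfies `0 < x` and `2x ≤ e_H`; in
particular `e_H` does not have index `1` in `H`. -/
theorem envelope_orderUnit_not_index_one {X : Type u} (ξ : X)
    {H : Type v} [AddCommGroup H] [PartialOrder H] [IsOrderedAddMonoid H]
    (eH : H) (bow : H → H → H → H → H) (j : FX X →+ H)
    (henv : IsUniversalDEnvelope (eElem X) eH bow j) :
    0 < bow 0 0 (j (aElem ξ)) (eH - j (aElem ξ)) ∧
    2 • bow 0 0 (j (aElem ξ)) (eH - j (aElem ξ)) ≤ eH := by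
  obtain ⟨⟨-, -, -, -, -, hmid⟩, hjmono, hje, huniv⟩ := henv
  set a := j (aElem ξ) with ha
  set x := bow 0 0 a (eH - a) with hx
  -- basic inequalities in FX
  have h0a : (0 : FX X) ≤ aElem ξ := by
    show (0 : Set X → ℤ) ≤ aBar ξ
    intro Y
    exact Set.indicator_nonneg (fun _ _ => zero_le_one) Y
  have hae : aElem ξ ≤ eElem X := by
    show aBar ξ ≤ eBar X
    intro Y
    exact Set.indicator_le_self' (fun _ _ => zero_le_one) Y
  have h0a' : (0 : H) ≤ a := by
    have := hjmono h0a
    simpa using this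
  have hae' : a ≤ eH := by
    have := hjmono hae
    simpa [hje] using this
  have h0e : (0 : H) ≤ eH - a := sub_nonneg.2 hae'
  obtain ⟨hx0, -, hxa, hxe⟩ := hmid 0 0 a (eH - a) h0a' h0e h0a' h0e
  have h2x : 2 • x ≤ eH := by
    have : x + x ≤ a + (eH - a) := add_le_add hxa hxe
    simpa [two_nsmul] using this
  -- the test D-structure on ℤ
  refine ⟨lt_of_le_of_ne hx0 ?_, h2x⟩
  intro heq
  set ι : ULift.{u_1} ℤ → ULift ℤ → ULift ℤ → ULift ℤ → ULift ℤ :=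
    fun _ _ y y' => ⟨min y.down y'.down⟩ with hι
  have hle : ∀ p q : ULift.{u_1} ℤ, p ≤ q ↔ p.down ≤ q.down := fun p q => Iff.rfl
  have hDK : IsDStructure (⟨2⟩ : ULift.{u_1} ℤ) ι := by
    refine ⟨?_, ?_, ?_, ?_, ?_, ?_⟩
    · intro m z hm hz
      rw [hle] at hz ⊢
      simp only [nsmul_eq_mul, ULift.mul_down, ULift.down_natCast, ULift.zero_down] at hz ⊢
      by_contra h'
      push_neg at h'
      nlinarith [Int.natCast_pos.2 hm]
    · rw [hle]; simp
    · intro z hz h3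
      rw [hle] at hz h3
      simp only [nsmul_eq_mul, ULift.mul_down, ULift.down_natCast, ULift.zero_down] at hz h3
      refine ULift.ext _ _ ?_
      show z.down = (0 : ℤ)
      push_cast at h3
      omega
    · intro x x' y y'; rfl
    · intro x x' y y'; simp [hι, min_comm]
    · intro x x' y y' h1 h2 h3 h4
      rw [hle] at h1 h2 h3 h4
      exact ⟨(hle _ _).2 (le_min h1 h2), (hle _ _).2 (le_min h3 h4),
        (hle _ _).2 (min_le_left _ _), (hle _ _).2 (min_le_right _ _)⟩
  set f0 : FX X →+ ℤ :=
    ((Pi.evalAddMonoidHom (fun _ : Set X => ℤ) (∅ : Set X)) +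
      (Pi.evalAddMonoidHom (fun _ : Set X => ℤ) (Set.univ : Set X))).comp
      (FX X).subtype with hf0
  set f : FX X →+ ULift.{u_1} ℤ :=
    ((AddEquiv.ulift (α := ℤ)).symm.toAddMonoidHom).comp f0 with hf
  have hfdown : ∀ g, (f g).down = f0 g := fun g => rfl
  have hfmono : Monotone f := by
    intro g g' hgg'
    rw [hle, hfdown, hfdown]
    have h1 : (g : Set X → ℤ) ∅ ≤ (g' : Set X → ℤ) ∅ := hgg' ∅
    have h2 : (g : Set X → ℤ) Set.univ ≤ (g' : Set X → ℤ) Set.univ := hgg' Set.univ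
    simpa [hf0, Pi.evalAddMonoidHom] using add_le_add h1 h2
  have hfe : f (eElem X) = ⟨2⟩ := by
    refine ULift.ext _ _ ?_
    rw [hfdown]
    simp [hf0, eElem, eBar, Pi.evalAddMonoidHom]
  have hfa : f (aElem ξ) = ⟨1⟩ := by
    refine ULift.ext _ _ ?_
    rw [hfdown]
    simp [hf0, aElem, aBar, Pi.evalAddMonoidHom, Set.indicator]
  obtain ⟨h, ⟨⟨hhmono, hhe, hhι⟩, hhj⟩, -⟩ := huniv (ULift ℤ) ⟨2⟩ ι hDK f hfmono hfe
  have hha : h a = ⟨1⟩ := by rw [ha, hhj, hfa]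
  have hh1 : h x = ⟨1⟩ := by
    rw [hx, hhι, map_sub, hhe, hha]
    refine ULift.ext _ _ ?_
    show min (⟨1⟩ : ULift.{u_1} ℤ).down ((⟨2⟩ - ⟨1⟩ : ULift.{u_1} ℤ)).down = 1
    rw [ULift.sub_down]
    norm_num
  rw [← heq, map_zero] at hh1
  have : (0 : ℤ) = 1 := congrArg ULift.down hh1
  exact one_ne_zero this.symm
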